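/- In OF_n, two elements f_{X,Y} and f_{Z,W} are R-equivalent iff Y = W (equivalently, they have the same image), and L-equivalent iff X = Z (equivalently, the same kernel). Consequently OF_n is H-trivial. -/

import Mathlib

/-- The order-preserving map `f_{X,Y} : [n+1] → [n+1]` (with top element
`Fin.last n` playing the role of `n+1`, and `X, Y ⊆ [n]` via `Fin.castSucc`)
determined by equal-size subsets `X, Y`: it sends the interval
`(x_{i-1}, x_i]` to `y_i` and everything above `x_l` to the top. -/
def fXY (n : ℕ) (X Y : Finset (Fin n)) (_h : X.card = Y.card) :
    Fin (n + 1) → Fin (n + 1) := fun x =>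
  if hk : (X.filter fun t => t.castSucc < x).card < Y.card then
    (Y.orderEmbOfFin rfl ⟨_, hk⟩).castSucc
  else Fin.last n

theorem fXY_monotone (n : ℕ) (X Y : Finset (Fin n)) (h : X.card = Y.card) :
    Monotone (fXY n X Y h) := by
  intro a b hab
  unfold fXY
  have hle : (X.filter fun t => t.castSucc < a).card ≤
      (X.filter fun t => t.castSucc < b).card :=
    Finset.card_le_card (Finset.monotone_filter_right X
      (fun t _ ht => lt_of_lt_of_le ht hab))
  by_cases ha : (X.filter fun t => t.castSucc < a).card < Y.card
  · by_cases hb : (X.filter fun t => t.castSucc < b).card < Y.card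
    · rw [dif_pos ha, dif_pos hb]
      exact Fin.castSucc_le_castSucc_iff.mpr
        ((Y.orderEmbOfFin rfl).monotone (by exact hle))
    · rw [dif_pos ha, dif_neg hb]; exact Fin.le_last _
  · have hb : ¬(X.filter fun t => t.castSucc < b).card < Y.card := by omega
    rw [dif_neg ha, dif_neg hb]

theorem fXY_last (n : ℕ) (X Y : Finset (Fin n)) (h : X.card = Y.card) :
    fXY n X Y h (Fin.last n) = Fin.last n := by
  unfold fXY
  rw [Finset.filter_true_of_mem (fun t _ => Fin.castSucc_lt_last t), h,
    dif_neg (lt_irrefl _)]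

/-- The monoid `OF_{n+1}` of order-preserving self-maps of `[n+1]` fixing the
top element, as a submonoid of `Function.End (Fin (n+1))`. -/
def OFmon (n : ℕ) : Submonoid (Function.End (Fin (n + 1))) where
  carrier := {f | Monotone f ∧ f (Fin.last n) = Fin.last n}
  mul_mem' := by
    rintro f g ⟨hf1, hf2⟩ ⟨hg1, hg2⟩
    refine ⟨hf1.comp hg1, ?_⟩
    show f (g (Fin.last n)) = Fin.last n
    rw [hg2, hf2]
  one_mem' := ⟨monotone_id, rfl⟩

/-- `f_{X,Y}` as an element of the monoid `OF_{n+1}`. -/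
def FXY (n : ℕ) (X Y : Finset (Fin n)) (h : X.card = Y.card) : OFmon n :=
  ⟨fXY n X Y h, fXY_monotone n X Y h, fXY_last n X Y h⟩

/-- Green's `R`-equivalence on a monoid. -/
def RRel {M : Type*} [Monoid M] (a b : M) : Prop :=
  (∃ u, a * u = b) ∧ ∃ u, b * u = a

/-- Green's `L`-equivalence on a monoid. -/
def LRel {M : Type*} [Monoid M] (a b : M) : Prop :=
  (∃ u, u * a = b) ∧ ∃ u, u * b = a

/-- Green's `J`-equivalence on a monoid. -/
def JRel {M : Type*} [Monoid M] (a b : M) : Prop :=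
  (∃ u v, u * a * v = b) ∧ ∃ u v, u * b * v = a

section AuxGeneral

variable {n : ℕ}

lemma ofm_mul_apply (f g : OFmon n) (x : Fin (n + 1)) :
    (f * g).1 x = f.1 (g.1 x) := rfl

lemma ofm_mono (f : OFmon n) : Monotone f.1 := f.2.1

lemma ofm_last (f : OFmon n) : f.1 (Fin.last n) = Fin.last n := f.2.2

/-- If the range of `g` is contained in that of `f`, then `g = f ∘ u` for a
monotone `u` fixing the top (take `u x` = the largest preimage of `g x`). -/
lemma exists_right_factor (f g : OFmon n) (hr : Set.range g.1 ⊆ Set.range f.1) :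
    ∃ u : OFmon n, f * u = g := by
  classical
  have hne : ∀ x, (Finset.univ.filter fun t => f.1 t = g.1 x).Nonempty := by
    intro x
    obtain ⟨t, ht⟩ := hr ⟨x, rfl⟩
    exact ⟨t, by simp [ht]⟩
  set u : Fin (n + 1) → Fin (n + 1) :=
    fun x => (Finset.univ.filter fun t => f.1 t = g.1 x).max' (hne x) with hu_def
  have hu : ∀ x, f.1 (u x) = g.1 x := fun x =>
    (Finset.mem_filter.mp (Finset.max'_mem _ (hne x))).2
  have humono : Monotone u := by
    intro a b hab
    by_contra hcon
    push_neg at hcon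
    have h1 : f.1 (u b) ≤ f.1 (u a) := ofm_mono f hcon.le
    rw [hu, hu] at h1
    have heq : g.1 a = g.1 b := le_antisymm (ofm_mono g hab) h1
    have hmem : u a ∈ Finset.univ.filter fun t => f.1 t = g.1 b := by
      simp [hu a, heq]
    exact absurd (Finset.le_max' _ _ hmem) (not_le.mpr hcon)
  have hulast : u (Fin.last n) = Fin.last n := by
    have hmem : Fin.last n ∈ Finset.univ.filter fun t => f.1 t = g.1 (Fin.last n) := by
      simp [ofm_last f, ofm_last g]
    exact le_antisymm (Fin.le_last _) (Finset.le_max' _ _ hmem)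
  exact ⟨⟨u, humono, hulast⟩, Subtype.ext (funext hu)⟩

/-- If the kernel of `f` refines that of `g`, then `g = u ∘ f` for a monotone
`u` fixing the top. -/
lemma exists_left_factor (f g : OFmon n)
    (hk : ∀ i j, f.1 i = f.1 j → g.1 i = g.1 j) :
    ∃ u : OFmon n, u * f = g := by
  have hne : ∀ y, (Finset.univ.filter fun t => y ≤ f.1 t).Nonempty :=
    fun y => ⟨Fin.last n, by simp [ofm_last f, Fin.le_last]⟩
  set m : Fin (n + 1) → Fin (n + 1) :=
    fun y => (Finset.univ.filter fun t => y ≤ f.1 t).min' (hne y) with hm_def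
  have hm_mem : ∀ y, y ≤ f.1 (m y) := fun y =>
    (Finset.mem_filter.mp (Finset.min'_mem _ (hne y))).2
  set u : Fin (n + 1) → Fin (n + 1) := fun y => g.1 (m y) with hu_def
  have key : ∀ x, u (f.1 x) = g.1 x := by
    intro x
    have h1 : m (f.1 x) ≤ x := Finset.min'_le _ _ (by simp)
    exact hk _ _ (le_antisymm (ofm_mono f h1) (hm_mem _))
  have humono : Monotone u := by
    intro a b hab
    exact ofm_mono g (Finset.min'_le _ _ (by simp [le_trans hab (hm_mem b)]))
  have hulast : u (Fin.last n) = Fin.last n := by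
    have h2 : f.1 (m (Fin.last n)) = f.1 (Fin.last n) := by
      rw [ofm_last f]
      exact le_antisymm (Fin.le_last _) (hm_mem _)
    show g.1 (m (Fin.last n)) = Fin.last n
    rw [hk _ _ h2, ofm_last g]
  exact ⟨⟨u, humono, hulast⟩, Subtype.ext (funext key)⟩

lemma RRel_iff_range (f g : OFmon n) :
    RRel f g ↔ Set.range f.1 = Set.range g.1 := by
  constructor
  · rintro ⟨⟨u, hu⟩, ⟨v, hv⟩⟩
    apply Set.Subset.antisymm
    · rintro _ ⟨x, rfl⟩
      exact ⟨v.1 x, congrFun (congrArg Subtype.val hv) x⟩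
    · rintro _ ⟨x, rfl⟩
      exact ⟨u.1 x, congrFun (congrArg Subtype.val hu) x⟩
  · intro h
    exact ⟨exists_right_factor f g h.ge, exists_right_factor g f h.le⟩

lemma LRel_iff_ker (f g : OFmon n) :
    LRel f g ↔ ∀ i j, (f.1 i = f.1 j ↔ g.1 i = g.1 j) := by
  constructor
  · rintro ⟨⟨u, hu⟩, ⟨v, hv⟩⟩
    intro i j
    constructor
    · intro hij
      have := congrFun (congrArg Subtype.val hu)
      rw [← this i, ← this j]
      show u.1 (f.1 i) = u.1 (f.1 j)
      rw [hij]
    · intro hij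
      have := congrFun (congrArg Subtype.val hv)
      rw [← this i, ← this j]
      show v.1 (g.1 i) = v.1 (g.1 j)
      rw [hij]
  · intro h
    exact ⟨exists_left_factor f g (fun i j => (h i j).mp),
      exists_left_factor g f (fun i j => (h i j).mpr)⟩

lemma htriv_aux (f g : OFmon n) (hr : Set.range f.1 ⊆ Set.range g.1)
    (hk : ∀ i j, f.1 i = f.1 j → g.1 i = g.1 j) (x0 : Fin (n + 1))
    (hmin : ∀ y, y < x0 → f.1 y = g.1 y) : ¬ f.1 x0 < g.1 x0 := by
  intro hlt
  obtain ⟨x', hx'⟩ := hr ⟨x0, rfl⟩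
  -- g x' = f x0 < g x0
  have hx'lt : x' < x0 := by
    by_contra hcon
    push_neg at hcon
    exact absurd (hx' ▸ ofm_mono g hcon) (not_le.mpr hlt)
  have h1 : f.1 x' = f.1 x0 := (hmin x' hx'lt).trans hx'
  have h2 : g.1 x' = g.1 x0 := hk _ _ h1
  rw [hx'] at h2
  exact absurd h2 hlt.ne

lemma htrivial (f g : OFmon n) (hr : Set.range f.1 = Set.range g.1)
    (hk : ∀ i j, (f.1 i = f.1 j ↔ g.1 i = g.1 j)) : f = g := by
  classical
  apply Subtype.ext
  funext x
  by_contra hne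
  have hSne : (Finset.univ.filter fun y => f.1 y ≠ g.1 y).Nonempty := ⟨x, by simp [hne]⟩
  set x0 := (Finset.univ.filter fun y => f.1 y ≠ g.1 y).min' hSne with hx0
  have hx0mem : f.1 x0 ≠ g.1 x0 := (Finset.mem_filter.mp (Finset.min'_mem _ hSne)).2
  have hmin : ∀ y, y < x0 → f.1 y = g.1 y := by
    intro y hy
    by_contra hcon
    exact absurd (Finset.min'_le _ y (by simp [hcon])) (not_le.mpr hy)
  rcases lt_trichotomy (f.1 x0) (g.1 x0) with h | h | h
  · exact htriv_aux f g hr.le (fun i j => (hk i j).mp) x0 hmin h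
  · exact hx0mem h
  · exact htriv_aux g f hr.ge (fun i j => (hk i j).mpr) x0
      (fun y hy => (hmin y hy).symm) h

end AuxGeneral

section AuxFXY

variable {n : ℕ}

lemma card_filter_lt_orderEmb (X : Finset (Fin n)) (k : Fin X.card) :
    (X.filter fun t => t < X.orderEmbOfFin rfl k).card = k := by
  have himg : X.filter (fun t => t < X.orderEmbOfFin rfl k)
      = (Finset.Iio k).image (X.orderEmbOfFin rfl) := by
    ext t
    simp only [Finset.mem_filter, Finset.mem_image, Finset.mem_Iio]
    constructor
    · rintro ⟨ht, hlt⟩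
      have : t ∈ Set.range (X.orderEmbOfFin rfl) := by
        rw [Finset.range_orderEmbOfFin]; exact ht
      obtain ⟨j, hj⟩ := this
      exact ⟨j, by rw [← hj] at hlt; exact (X.orderEmbOfFin rfl).lt_iff_lt.mp hlt, hj⟩
    · rintro ⟨j, hj, rfl⟩
      exact ⟨Finset.orderEmbOfFin_mem _ _ _, (X.orderEmbOfFin rfl).lt_iff_lt.mpr hj⟩
  rw [himg, Finset.card_image_of_injective _ (X.orderEmbOfFin rfl).injective]
  simp

lemma fXY_eq_iff (X Y : Finset (Fin n)) (h : X.card = Y.card) (x x' : Fin (n + 1)) :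
    fXY n X Y h x = fXY n X Y h x' ↔
      (X.filter fun t => t.castSucc < x).card = (X.filter fun t => t.castSucc < x').card := by
  have hb1 : (X.filter fun t => t.castSucc < x).card ≤ Y.card :=
    h ▸ Finset.card_le_card (Finset.filter_subset _ _)
  have hb2 : (X.filter fun t => t.castSucc < x').card ≤ Y.card :=
    h ▸ Finset.card_le_card (Finset.filter_subset _ _)
  unfold fXY
  by_cases h1 : (X.filter fun t => t.castSucc < x).card < Y.card <;>
    by_cases h2 : (X.filter fun t => t.castSucc < x').card < Y.card
  · rw [dif_pos h1, dif_pos h2]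
    constructor
    · intro he
      have := (Y.orderEmbOfFin rfl).injective (Fin.castSucc_injective _ he)
      exact congrArg Fin.val this
    · intro he
      have : (⟨_, h1⟩ : Fin Y.card) = ⟨_, h2⟩ := Fin.ext he
      rw [this]
  · rw [dif_pos h1, dif_neg h2]
    constructor
    · intro he; exact absurd he (Fin.castSucc_lt_last _).ne
    · intro he; omega
  · rw [dif_neg h1, dif_pos h2]
    constructor
    · intro he; exact absurd he.symm (Fin.castSucc_lt_last _).ne
    · intro he; omega
  · rw [dif_neg h1, dif_neg h2]
    constructor
    · intro _; omega
    · intro _; rfl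

lemma range_fXY (X Y : Finset (Fin n)) (h : X.card = Y.card) :
    Set.range (fXY n X Y h) = Fin.castSucc '' ↑Y ∪ {Fin.last n} := by
  ext y
  constructor
  · rintro ⟨x, rfl⟩
    unfold fXY
    by_cases hk : (X.filter fun t => t.castSucc < x).card < Y.card
    · rw [dif_pos hk]
      exact Or.inl ⟨_, Finset.orderEmbOfFin_mem _ _ _, rfl⟩
    · rw [dif_neg hk]; exact Or.inr rfl
  · rintro (⟨y0, hy0, rfl⟩ | rfl)
    · have : y0 ∈ Set.range (Y.orderEmbOfFin rfl) := by
        rw [Finset.range_orderEmbOfFin]; exact hy0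
      obtain ⟨k, hk⟩ := this
      have hkX : (k : ℕ) < X.card := by rw [h]; exact k.isLt
      refine ⟨(X.orderEmbOfFin rfl ⟨k, hkX⟩).castSucc, ?_⟩
      have hc : (X.filter fun t => t.castSucc <
          (X.orderEmbOfFin rfl ⟨k, hkX⟩).castSucc).card = k := by
        rw [show (X.filter fun t => t.castSucc < (X.orderEmbOfFin rfl ⟨k, hkX⟩).castSucc)
            = X.filter (fun t => t < X.orderEmbOfFin rfl ⟨k, hkX⟩) from by
          apply Finset.filter_congr; intro t _; simp [Fin.castSucc_lt_castSucc_iff]]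
        exact card_filter_lt_orderEmb X ⟨k, hkX⟩
      have hlt : (X.filter fun t => t.castSucc <
          (X.orderEmbOfFin rfl ⟨k, hkX⟩).castSucc).card < Y.card := by
        rw [hc]; exact k.isLt
      unfold fXY
      rw [dif_pos hlt, ← hk]
      have : (⟨_, hlt⟩ : Fin Y.card) = k := Fin.ext hc
      rw [this]
    · exact ⟨Fin.last n, fXY_last n X Y h⟩

lemma mem_iff_fXY_ne (X Y : Finset (Fin n)) (h : X.card = Y.card) (t : Fin n) :
    t ∈ X ↔ fXY n X Y h t.castSucc ≠ fXY n X Y h t.succ := by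
  rw [Ne, fXY_eq_iff]
  have h1 : (X.filter fun s => s.castSucc < t.castSucc) = X.filter (fun s => s < t) := by
    apply Finset.filter_congr; intro s _; simp [Fin.castSucc_lt_castSucc_iff]
  have h2 : (X.filter fun s => s.castSucc < t.succ) = X.filter (fun s => s ≤ t) := by
    apply Finset.filter_congr; intro s _
    simp only [Fin.lt_def, Fin.le_def, Fin.coe_castSucc, Fin.val_succ, eq_iff_iff]; omega
  rw [h1, h2]
  constructor
  · intro ht
    have hss : X.filter (fun s => s < t) ⊂ X.filter (fun s => s ≤ t) := by
      refine Finset.ssubset_iff_of_subset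
        (Finset.monotone_filter_right X (fun s _ hs => le_of_lt hs)) |>.mpr ?_
      exact ⟨t, Finset.mem_filter.mpr ⟨ht, le_refl t⟩,
        fun hc => absurd (Finset.mem_filter.mp hc).2 (lt_irrefl t)⟩
    exact (Finset.card_lt_card hss).ne
  · intro hne
    by_contra ht
    apply hne
    congr 1
    ext s
    simp only [Finset.mem_filter, and_congr_right_iff]
    intro hs
    constructor
    · exact le_of_lt
    · intro hle
      rcases lt_or_eq_of_le hle with h' | h'
      · exact h'
      · exact absurd (h' ▸ hs) ht

end AuxFXY

/-- In `OF_{n+1}`: `f_{X,Y} R f_{Z,W}` iff `Y = W` (equivalently, equal images)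
and `f_{X,Y} L f_{Z,W}` iff `X = Z` (equivalently, equal kernels). Consequently
`OF_{n+1}` is `H`-trivial. -/
theorem statement13 (n : ℕ) :
    (∀ (X Y Z W : Finset (Fin n)) (h1 : X.card = Y.card) (h2 : Z.card = W.card),
      RRel (FXY n X Y h1) (FXY n Z W h2) ↔ Y = W) ∧
    (∀ (X Y Z W : Finset (Fin n)) (h1 : X.card = Y.card) (h2 : Z.card = W.card),
      LRel (FXY n X Y h1) (FXY n Z W h2) ↔ X = Z) ∧
    (∀ f g : OFmon n, RRel f g ↔ Set.range f.1 = Set.range g.1) ∧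
    (∀ f g : OFmon n, LRel f g ↔ ∀ i j, (f.1 i = f.1 j ↔ g.1 i = g.1 j)) ∧
    (∀ f g : OFmon n, RRel f g → LRel f g → f = g) := by
  refine ⟨?_, ?_, RRel_iff_range, LRel_iff_ker, fun f g hR hL =>
    htrivial f g ((RRel_iff_range f g).mp hR) ((LRel_iff_ker f g).mp hL)⟩
  · intro X Y Z W h1 h2
    rw [RRel_iff_range]
    show Set.range (fXY n X Y h1) = Set.range (fXY n Z W h2) ↔ Y = W
    rw [range_fXY, range_fXY]
    have hmem : ∀ (S : Finset (Fin n)) (y : Fin n),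
        Fin.castSucc y ∈ (Fin.castSucc '' ↑S ∪ {Fin.last n} : Set (Fin (n + 1))) ↔
          y ∈ S := by
      intro S y
      simp only [Set.mem_union, Set.mem_image, Finset.mem_coe, Set.mem_singleton_iff]
      constructor
      · rintro (⟨y0, hy0, he⟩ | he)
        · rwa [← Fin.castSucc_injective n he]
        · exact absurd he (Fin.castSucc_lt_last y).ne
      · intro hy; exact Or.inl ⟨y, hy, rfl⟩
    constructor
    · intro hre
      ext y
      rw [← hmem Y y, ← hmem W y, hre]
    · rintro rfl; rfl
  · intro X Y Z W h1 h2
    rw [LRel_iff_ker]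
    show (∀ i j, (fXY n X Y h1 i = fXY n X Y h1 j ↔ fXY n Z W h2 i = fXY n Z W h2 j))
      ↔ X = Z
    constructor
    · intro hker
      ext t
      rw [mem_iff_fXY_ne X Y h1 t, mem_iff_fXY_ne Z W h2 t]
      exact not_congr (hker _ _)
    · rintro rfl
      intro i j
      rw [fXY_eq_iff, fXY_eq_iff]
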